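/- arXiv:2112.03655 — 2 statements merged into one kernel-verified Lean document; each statement's English description precedes it below -/
import Mathlib

section
/- Let G be a finite connected simple graph and let i, j, v be vertices of G. Then f_G(i,v) + f_G(v,j) − f_G(i,j) = 2·|𝓕_G(i,j;v)|, where 𝓕_G(i,j;v) is the set of 2-forests of G in which i and j lie in the same component and v lies in the other component. In particular f_G(i,v) + f_G(v,j) − f_G(i,j) ≥ 0. -/
open SimpleGraph Filter

namespace Braess

universe u

variable {V : Type*}

/-- The number of spanning trees of `G`. -/
noncomputable def tau (G : SimpleGraph V) : ℕ :=
  Nat.card {H : SimpleGraph V // H ≤ G ∧ H.IsTree}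

/-- `H` is a 2-forest (spanning forest with exactly two components) of `G`. -/
def IsTwoForest (G H : SimpleGraph V) : Prop :=
  H ≤ G ∧ H.IsAcyclic ∧ Nat.card H.ConnectedComponent = 2

/-- `f_G(i,j)`: the number of 2-forests of `G` with `i` and `j` in different components. -/
noncomputable def fsep (G : SimpleGraph V) (i j : V) : ℕ :=
  Nat.card {H : SimpleGraph V // IsTwoForest G H ∧ ¬ H.Reachable i j}

/-- `q_{i,j}`: the number of 2-forests of `G` with `i` and `j` in one component and `v`
in the other. -/
noncomputable def qEntry (G : SimpleGraph V) (v i j : V) : ℕ :=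
  Nat.card {H : SimpleGraph V // IsTwoForest G H ∧ H.Reachable i j ∧ ¬ H.Reachable i v}

/-- Degree of a vertex. -/
noncomputable def deg (G : SimpleGraph V) (i : V) : ℕ :=
  Nat.card (G.neighborSet i)

/-- Number of edges of `G`. -/
noncomputable def edgeCount (G : SimpleGraph V) : ℕ :=
  Nat.card G.edgeSet

/-- `d_G^T F_G d_G`. -/
noncomputable def dFd (G : SimpleGraph V) : ℚ :=
  ∑ᶠ i, ∑ᶠ j, (deg G i : ℚ) * (fsep G i j : ℚ) * (deg G j : ℚ)

/-- `d_G^T f^v_G`. -/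
noncomputable def dfv (G : SimpleGraph V) (v : V) : ℚ :=
  ∑ᶠ i, (deg G i : ℚ) * (fsep G i v : ℚ)

/-- `d_G^T Q_{G,v} d_G`. -/
noncomputable def dQd (G : SimpleGraph V) (v : V) : ℚ :=
  ∑ᶠ i, ∑ᶠ j, (deg G i : ℚ) * (qEntry G v i j : ℚ) * (deg G j : ℚ)

/-- `φ_G(v) = d_G^T (2 f^v_G 𝟙^T − F_G) d_G`. -/
noncomputable def phi (G : SimpleGraph V) (v : V) : ℚ :=
  ∑ᶠ i, ∑ᶠ j, (deg G i : ℚ) * (2 * (fsep G i v : ℚ) - (fsep G i j : ℚ)) * (deg G j : ℚ)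

/-- Kemeny's constant, via the combinatorial formula. -/
noncomputable def kemeny (G : SimpleGraph V) : ℚ :=
  dFd G / (4 * (edgeCount G : ℚ) * (tau G : ℚ))

/-- Eccentricity of a vertex. -/
noncomputable def ecc (G : SimpleGraph V) (v : V) : ℕ :=
  sSup (Set.range (G.dist v))

/-- The graph `G̃(v,k₁,k₂)`, obtained from `G` by attaching at `v` two pendent paths
with `k₁` and `k₂` new vertices respectively. -/
def attach (G : SimpleGraph V) (v : V) (k₁ k₂ : ℕ) :
    SimpleGraph (V ⊕ (Fin k₁ ⊕ Fin k₂)) where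
  Adj x y :=
    match x, y with
    | .inl a, .inl b => G.Adj a b
    | .inl a, .inr (.inl i) => a = v ∧ (i : ℕ) = 0
    | .inl a, .inr (.inr i) => a = v ∧ (i : ℕ) = 0
    | .inr (.inl i), .inl b => b = v ∧ (i : ℕ) = 0
    | .inr (.inr i), .inl b => b = v ∧ (i : ℕ) = 0
    | .inr (.inl i), .inr (.inl j) => (i : ℕ) + 1 = (j : ℕ) ∨ (j : ℕ) + 1 = (i : ℕ)
    | .inr (.inr i), .inr (.inr j) => (i : ℕ) + 1 = (j : ℕ) ∨ (j : ℕ) + 1 = (i : ℕ)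
    | .inr (.inl _), .inr (.inr _) => False
    | .inr (.inr _), .inr (.inl _) => False
  symm := by
    constructor
    rintro (a | (i | i)) (b | (j | j)) h
    · exact G.adj_symm h
    · exact h
    · exact h
    · exact h
    · exact h.symm
    · exact h.elim
    · exact h
    · exact h.elim
    · exact h.symm
  loopless := by
    constructor
    rintro (a | (i | i)) h
    · exact G.loopless.irrefl a h
    · omega
    · omega

/-- The far endpoint of the first attached path (it is `v` itself when `k₁ = 0`). -/
def farEnd₁ (v : V) (k₁ k₂ : ℕ) : V ⊕ (Fin k₁ ⊕ Fin k₂) :=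
  if h : 0 < k₁ then .inr (.inl ⟨k₁ - 1, by omega⟩) else .inl v

/-- The far endpoint of the second attached path (it is `v` itself when `k₂ = 0`). -/
def farEnd₂ (v : V) (k₁ k₂ : ℕ) : V ⊕ (Fin k₁ ⊕ Fin k₂) :=
  if h : 0 < k₂ then .inr (.inr ⟨k₂ - 1, by omega⟩) else .inl v

/-- The graph `Ĝ(v,k₁,k₂)`: `G̃(v,k₁,k₂)` together with the extra edge joining the far
endpoints of the two attached paths. -/
def attachEdge (G : SimpleGraph V) (v : V) (k₁ k₂ : ℕ) :
    SimpleGraph (V ⊕ (Fin k₁ ⊕ Fin k₂)) :=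
  attach G v k₁ k₂ ⊔ fromEdgeSet {s(farEnd₁ v k₁ k₂, farEnd₂ v k₁ k₂)}

/-- `G` is `(v,k₁,k₂)`-paradoxical. -/
def IsParadoxical (G : SimpleGraph V) (v : V) (k₁ k₂ : ℕ) : Prop :=
  kemeny (attach G v k₁ k₂) < kemeny (attachEdge G v k₁ k₂)

/-- `φ₁(k₁,k₂)`. -/
noncomputable def kphi₁ (k₁ k₂ : ℕ) : ℚ :=
  -(2 / 3) * ((k₁ : ℚ) + k₂) * ((k₁ : ℚ) + k₂ - 1) + 2 * k₁ * k₂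

/-- `φ₂(k₁,k₂)`. -/
noncomputable def kphi₂ (k₁ k₂ : ℕ) : ℚ :=
  -((k₁ : ℚ) + k₂) * (5 * ((k₁ : ℚ) + k₂) ^ 2 - ((k₁ : ℚ) + k₂) - 1)
    + 12 * k₁ * k₂ * ((k₁ : ℚ) + k₂ + 1)

/-- `φ₃(k₁,k₂)`. -/
noncomputable def kphi₃ (k₁ k₂ : ℕ) : ℚ :=
  -((k₁ : ℚ) + k₂ + 1) * ((k₁ : ℚ) + k₂) * ((k₁ : ℚ) + k₂ - 1) ^ 2

/-- `Φ_G(v,k₁,k₂)`, with `k = k₁ + k₂ + 1`. -/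
noncomputable def Phi (G : SimpleGraph V) (v : V) (k₁ k₂ : ℕ) : ℚ :=
  ((k₁ : ℚ) + k₂ + 1) * phi G v
    + 4 * (edgeCount G : ℚ) ^ 2 * (tau G : ℚ) * ((k₁ : ℚ) + k₂ + 1) * kphi₁ k₁ k₂
    + (2 * (edgeCount G : ℚ) * (tau G : ℚ) * ((k₁ : ℚ) + k₂ + 1) / 3) * kphi₂ k₁ k₂
    + (2 * (tau G : ℚ) * ((k₁ : ℚ) + k₂ + 1) / 3) * kphi₃ k₁ k₂

/-- A sequence of graphs with specified vertices is asymptotically paradoxical. -/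
def AsympParadoxical {W : ℕ → Type u} (G : ∀ n, SimpleGraph (W n)) (v : ∀ n, W n) : Prop :=
  ∀ l₁ l₂ : ℕ, 2 ≤ l₁ + l₂ → ∃ N, ∀ n ≥ N, IsParadoxical (G n) (v n) l₁ l₂

section Glue

variable {V₁ V₂ : Type*}

/-- The graph obtained from `H₁` and `H₂` by identifying `v₁ ∈ V(H₁)` and `v₂ ∈ V(H₂)` as a
single vertex (represented by `Sum.inl v₁`). -/
def glue (H₁ : SimpleGraph V₁) (H₂ : SimpleGraph V₂) (v₁ : V₁) (v₂ : V₂) :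
    SimpleGraph (V₁ ⊕ {x : V₂ // x ≠ v₂}) where
  Adj x y :=
    match x, y with
    | .inl a, .inl b => H₁.Adj a b
    | .inl a, .inr b => a = v₁ ∧ H₂.Adj v₂ b.1
    | .inr a, .inl b => b = v₁ ∧ H₂.Adj v₂ a.1
    | .inr a, .inr b => H₂.Adj a.1 b.1
  symm := by
    constructor
    rintro (a | a) (b | b) h
    · exact H₁.adj_symm h
    · exact h
    · exact h
    · exact H₂.adj_symm h
  loopless := by
    constructor
    rintro (a | a) h
    · exact H₁.loopless.irrefl a h
    · exact H₂.loopless.irrefl a.1 h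

/-- The canonical map from `V₂` to the vertex set of the glued graph. -/
def glueRight [DecidableEq V₂] (v₁ : V₁) (v₂ : V₂) (x : V₂) : V₁ ⊕ {y : V₂ // y ≠ v₂} :=
  if h : x = v₂ then .inl v₁ else .inr ⟨x, h⟩

end Glue

section MultiGlue

variable {ι : Type*} {W : ι → Type*} {V₀ : Type*}

/-- The graph obtained from the family `H i` and `G` by identifying all the vertices `w i`
and `v` as a single vertex (represented by `Sum.inl v`). -/
def multiGlue (H : ∀ i, SimpleGraph (W i)) (w : ∀ i, W i)
    (G : SimpleGraph V₀) (v : V₀) :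
    SimpleGraph (V₀ ⊕ Σ i, {x : W i // x ≠ w i}) where
  Adj x y :=
    match x, y with
    | .inl a, .inl b => G.Adj a b
    | .inl a, .inr ⟨i, b⟩ => a = v ∧ (H i).Adj (w i) b.1
    | .inr ⟨i, a⟩, .inl b => b = v ∧ (H i).Adj (w i) a.1
    | .inr ⟨i, a⟩, .inr ⟨j, b⟩ => ∃ h : i = j, (H j).Adj (h ▸ a).1 b.1
  symm := by
    constructor
    rintro (a | ⟨i, a⟩) (b | ⟨j, b⟩) h
    · exact G.adj_symm h
    · exact h
    · exact h
    · obtain ⟨rfl, h⟩ := h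
      exact ⟨rfl, (H i).adj_symm h⟩
  loopless := by
    constructor
    rintro (a | ⟨i, a⟩) h
    · exact G.loopless.irrefl a h
    · obtain ⟨h', h⟩ := h
      exact (H i).loopless.irrefl a.1 h

end MultiGlue

/-- The broom `𝓑_{n,k}`: a path on the `k` vertices `0, 1, …, k−1` together with `n − k`
pendent vertices (the vertices `k, …, n−1`) all adjacent to the vertex `0`. -/
def broomGraph (n k : ℕ) : SimpleGraph (Fin n) where
  Adj i j :=
    ((i : ℕ) + 1 = (j : ℕ) ∧ (j : ℕ) < k) ∨ ((j : ℕ) + 1 = (i : ℕ) ∧ (i : ℕ) < k) ∨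
      ((i : ℕ) = 0 ∧ k ≤ (j : ℕ) ∧ i ≠ j) ∨ ((j : ℕ) = 0 ∧ k ≤ (i : ℕ) ∧ i ≠ j)
  symm := by
    constructor
    intro i j h
    tauto
  loopless := by
    constructor
    rintro i (⟨h, -⟩ | ⟨h, -⟩ | ⟨-, -, h⟩ | ⟨-, -, h⟩)
    · omega
    · omega
    · exact h rfl
    · exact h rfl

section Branch

variable (G : SimpleGraph V) (v : V)

/-- The vertex set of the branch of `G` at `v` corresponding to the connected component `c`
of `G − v`. -/
def branchSet (c : (G.induce {x : V | x ≠ v}).ConnectedComponent) : Set V :=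
  insert v {x : V | ∃ h : x ≠ v,
    (G.induce {x : V | x ≠ v}).connectedComponentMk ⟨x, h⟩ = c}

/-- The vertex set of the complementary part `G'_c`: everything outside the branch at `c`,
together with `v`. -/
def cobranchSet (c : (G.induce {x : V | x ≠ v}).ConnectedComponent) : Set V :=
  insert v {x : V | ∃ h : x ≠ v,
    (G.induce {x : V | x ≠ v}).connectedComponentMk ⟨x, h⟩ ≠ c}

end Branch

section Sequence

/-- `Tnew` is obtained from `Told` by adding one new pendent vertex (the last vertex). -/
def AddPendentStep {n : ℕ} (Told : SimpleGraph (Fin (n + 1)))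
    (Tnew : SimpleGraph (Fin (n + 2))) : Prop :=
  (∀ a b : Fin (n + 1), Tnew.Adj a.castSucc b.castSucc ↔ Told.Adj a b) ∧
    ∃ u : Fin (n + 1), ∀ x : Fin (n + 1), Tnew.Adj (Fin.last (n + 1)) x.castSucc ↔ x = u

/-- `Tnew` is obtained from `Told` by subdividing one edge, the new (last) vertex being
placed in the middle of it. -/
def SubdivideStep {n : ℕ} (Told : SimpleGraph (Fin (n + 1)))
    (Tnew : SimpleGraph (Fin (n + 2))) : Prop :=
  ∃ a b : Fin (n + 1), Told.Adj a b ∧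
    (∀ x y : Fin (n + 1), Tnew.Adj x.castSucc y.castSucc ↔ (Told.Adj x y ∧ s(x, y) ≠ s(a, b))) ∧
    (∀ x : Fin (n + 1), Tnew.Adj (Fin.last (n + 1)) x.castSucc ↔ (x = a ∨ x = b))

/-- The vertex set of the branch of `T` at the vertex `0` containing the vertex `w`. -/
def branchSetAt {m : ℕ} (T : SimpleGraph (Fin (m + 1))) (w : Fin (m + 1)) :
    Set (Fin (m + 1)) :=
  insert 0 {y : Fin (m + 1) | ∃ (hy : y ≠ 0) (hw : w ≠ 0),
    (T.induce {z : Fin (m + 1) | z ≠ 0}).Reachable ⟨y, hy⟩ ⟨w, hw⟩}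

/-- The eccentricity of the vertex `0` in the branch of `T` at `0` containing `w`. -/
noncomputable def branchEcc {m : ℕ} (T : SimpleGraph (Fin (m + 1))) (w : Fin (m + 1)) : ℕ :=
  ecc (T.induce (branchSetAt T w)) ⟨0, Set.mem_insert _ _⟩

/-- `f = Θ(g)` (big Theta) for `ℕ`-valued sequences. -/
def IsBigTheta (f g : ℕ → ℕ) : Prop :=
  ∃ c₁ c₂ : ℚ, 0 < c₁ ∧ 0 < c₂ ∧
    ∃ N, ∀ n ≥ N, c₁ * (g n : ℚ) ≤ (f n : ℚ) ∧ (f n : ℚ) ≤ c₂ * (g n : ℚ)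

/-- `β_n`: the number of branches of `T n` at the vertex `0` whose eccentricity function (in
later members of the sequence, under the consistent indexing that tracks each branch by the
vertices it contains) is `Θ` of the eccentricity of `0`. -/
noncomputable def beta (T : ∀ n : ℕ, SimpleGraph (Fin (n + 1))) (n : ℕ) : ℕ :=
  Nat.card {c : ((T n).induce {z : Fin (n + 1) | z ≠ 0}).ConnectedComponent //
    ∃ (x : Fin (n + 1)) (hx : x ≠ 0),
      ((T n).induce {z : Fin (n + 1) | z ≠ 0}).connectedComponentMk ⟨x, hx⟩ = c ∧
      IsBigTheta
        (fun m => if h : n ≤ m then branchEcc (T m) (Fin.castLE (by omega) x) else 0)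
        (fun m => ecc (T m) 0)}

end Sequence


private lemma card_two_trans {α : Type*} (h2 : Nat.card α = 2) {a b c : α}
    (hab : a ≠ b) (hcb : c ≠ b) : a = c := by
  obtain ⟨x, y, hxy, hU⟩ := Nat.card_eq_two_iff.mp h2
  have ha : a ∈ ({x, y} : Set α) := hU ▸ Set.mem_univ a
  have hb : b ∈ ({x, y} : Set α) := hU ▸ Set.mem_univ b
  have hc : c ∈ ({x, y} : Set α) := hU ▸ Set.mem_univ c
  simp only [Set.mem_insert_iff, Set.mem_singleton_iff] at ha hb hc
  rcases ha with rfl | rfl <;> rcases hb with rfl | rfl <;> rcases hc with rfl | rfl <;>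
    first | rfl | (exact absurd rfl hab) | (exact absurd rfl hcb)

private lemma twoForest_trans {V : Type*} {H : SimpleGraph V}
    (h2 : Nat.card H.ConnectedComponent = 2) {x y z : V}
    (hxy : ¬ H.Reachable x y) (hyz : ¬ H.Reachable y z) : H.Reachable x z := by
  have h1 : H.connectedComponentMk x ≠ H.connectedComponentMk y :=
    fun h => hxy (SimpleGraph.ConnectedComponent.eq.mp h)
  have h3 : H.connectedComponentMk z ≠ H.connectedComponentMk y :=
    fun h => hyz ((SimpleGraph.ConnectedComponent.eq.mp h).symm)
  exact SimpleGraph.ConnectedComponent.eq.mp (card_two_trans h2 h1 h3)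

/-- `f(i,v) + f(v,j) − f(i,j) = 2·|𝓕_G(i,j;v)| ≥ 0`. -/
theorem stmt_8 {V : Type*} [Fintype V] (G : SimpleGraph V) (hG : G.Connected) (i j v : V) :
    ((fsep G i v : ℤ) + (fsep G v j : ℤ) - (fsep G i j : ℤ) = 2 * (qEntry G v i j : ℤ)) ∧
    (0 ≤ (fsep G i v : ℤ) + (fsep G v j : ℤ) - (fsep G i j : ℤ)) := by
  classical
  have hfin : Finite (SimpleGraph V) := inferInstance
  set Q : Set (SimpleGraph V) :=
    {H | IsTwoForest G H ∧ H.Reachable i j ∧ ¬ H.Reachable i v} with hQ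
  set X : Set (SimpleGraph V) :=
    {H | IsTwoForest G H ∧ ¬ H.Reachable i v ∧ ¬ H.Reachable i j} with hX
  set Y : Set (SimpleGraph V) :=
    {H | IsTwoForest G H ∧ ¬ H.Reachable v j ∧ ¬ H.Reachable i j} with hY
  have hA : fsep G i v = Q.ncard + X.ncard := by
    have hU : {H : SimpleGraph V | IsTwoForest G H ∧ ¬ H.Reachable i v} = Q ∪ X := by
      ext H
      simp only [hQ, hX, Set.mem_setOf_eq, Set.mem_union]
      constructor
      · rintro ⟨h2f, hiv⟩
        by_cases hij : H.Reachable i j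
        · exact Or.inl ⟨h2f, hij, hiv⟩
        · exact Or.inr ⟨h2f, hiv, hij⟩
      · rintro (⟨h2f, -, hiv⟩ | ⟨h2f, hiv, -⟩) <;> exact ⟨h2f, hiv⟩
    have hd : Disjoint Q X := by
      rw [Set.disjoint_left]
      rintro H ⟨-, hij, -⟩ ⟨-, -, hij'⟩
      exact hij' hij
    calc fsep G i v = ({H : SimpleGraph V |
            IsTwoForest G H ∧ ¬ H.Reachable i v} : Set _).ncard := rfl
      _ = Q.ncard + X.ncard := by rw [hU, Set.ncard_union_eq hd (Set.toFinite _) (Set.toFinite _)]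
  have hB : fsep G v j = Q.ncard + Y.ncard := by
    have hU : {H : SimpleGraph V | IsTwoForest G H ∧ ¬ H.Reachable v j} = Q ∪ Y := by
      ext H
      simp only [hQ, hY, Set.mem_setOf_eq, Set.mem_union]
      constructor
      · rintro ⟨h2f, hvj⟩
        by_cases hij : H.Reachable i j
        · refine Or.inl ⟨h2f, hij, fun hiv => hvj (hiv.symm.trans hij)⟩
        · exact Or.inr ⟨h2f, hvj, hij⟩
      · rintro (⟨h2f, hij, hiv⟩ | ⟨h2f, hvj, -⟩)
        · exact ⟨h2f, fun hvj => hiv (hij.trans hvj.symm)⟩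
        · exact ⟨h2f, hvj⟩
    have hd : Disjoint Q Y := by
      rw [Set.disjoint_left]
      rintro H ⟨-, hij, -⟩ ⟨-, -, hij'⟩
      exact hij' hij
    calc fsep G v j = ({H : SimpleGraph V |
            IsTwoForest G H ∧ ¬ H.Reachable v j} : Set _).ncard := rfl
      _ = Q.ncard + Y.ncard := by rw [hU, Set.ncard_union_eq hd (Set.toFinite _) (Set.toFinite _)]
  have hC : fsep G i j = X.ncard + Y.ncard := by
    have hU : {H : SimpleGraph V | IsTwoForest G H ∧ ¬ H.Reachable i j} = X ∪ Y := by
      ext H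
      simp only [hX, hY, Set.mem_setOf_eq, Set.mem_union]
      constructor
      · rintro ⟨h2f, hij⟩
        by_cases hiv : H.Reachable i v
        · refine Or.inr ⟨h2f, fun hvj => hij (hiv.trans hvj), hij⟩
        · exact Or.inl ⟨h2f, hiv, hij⟩
      · rintro (⟨h2f, -, hij⟩ | ⟨h2f, -, hij⟩) <;> exact ⟨h2f, hij⟩
    have hd : Disjoint X Y := by
      rw [Set.disjoint_left]
      rintro H ⟨h2f, hiv, hij⟩ ⟨-, hvj, -⟩
      exact hij (twoForest_trans h2f.2.2 hiv hvj)
    calc fsep G i j = ({H : SimpleGraph V |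
            IsTwoForest G H ∧ ¬ H.Reachable i j} : Set _).ncard := rfl
      _ = X.ncard + Y.ncard := by rw [hU, Set.ncard_union_eq hd (Set.toFinite _) (Set.toFinite _)]
  have hq : qEntry G v i j = Q.ncard := rfl
  constructor
  · rw [hA, hB, hC, hq]; push_cast; ring
  · rw [hA, hB, hC]; push_cast; linarith [Q.ncard.cast_nonneg (α := ℤ)]

end Braess
end

section
/- Let G be a finite connected simple graph with at least 2 vertices, and let v be any vertex of G. Then φ_G(v) = d_G^T (2 f^v_G 𝟙^T − F_G) d_G > 0. -/
open SimpleGraph Filter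

namespace Braess

universe u

variable {V : Type*}

section Stmt9Aux

variable {V : Type*}

private lemma acyclic_sup_edge {H : SimpleGraph V} {a b : V} (hH : H.IsAcyclic)
    (hab : ¬ H.Reachable a b) : (H ⊔ edge a b).IsAcyclic := by
  have hne : a ≠ b := by rintro rfl; exact hab (Reachable.refl a)
  have hnadj : ¬ H.Adj a b := fun h => hab h.reachable
  have hdel : (H ⊔ edge a b) \ fromEdgeSet {s(a, b)} = H := by
    ext x y
    simp only [sdiff_adj, sup_adj, edge_adj, fromEdgeSet_adj, Set.mem_singleton_iff,
      Sym2.eq_iff]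
    constructor
    · rintro ⟨h1 | h2, h3⟩
      · exact h1
      · exact absurd ⟨h2.1, (by rintro rfl; exact h2.2 rfl : x ≠ y)⟩ h3
    · intro h
      refine ⟨Or.inl h, ?_⟩
      rintro ⟨(⟨rfl, rfl⟩ | ⟨rfl, rfl⟩), -⟩
      · exact hnadj h
      · exact hnadj h.symm
  have hbridge : (H ⊔ edge a b).IsBridge s(a, b) := by
    rw [isBridge_iff]
    show ¬ ((H ⊔ edge a b) \ fromEdgeSet {s(a, b)}).Reachable a b
    rw [hdel]
    exact hab
  intro u c hc
  have hmem : s(a, b) ∉ c.edges :=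
    hbridge.notMem_edges_of_isCycle hc
  have hsub : ∀ e ∈ c.edges, e ∈ H.edgeSet := by
    intro e he
    have h1 := c.edges_subset_edgeSet he
    rw [edgeSet_sup, edge, edgeSet_fromEdgeSet] at h1
    rcases h1 with h1 | h1
    · exact h1
    · exfalso
      have : e = s(a, b) := h1.1
      exact hmem (this ▸ he)
  exact hH (c.transfer H hsub) (hc.transfer hsub)

private lemma reach_sup_edge {H : SimpleGraph V} {a b x y : V}
    (h : (H ⊔ edge a b).Reachable x y) :
    H.Reachable x y ∨ (H.Reachable x a ∧ H.Reachable b y) ∨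
      (H.Reachable x b ∧ H.Reachable a y) := by
  obtain ⟨p⟩ := h
  induction p with
  | nil => exact Or.inl (Reachable.refl _)
  | @cons u s t h q ih =>
    rw [sup_adj, edge_adj] at h
    rcases h with h | ⟨(⟨rfl, rfl⟩ | ⟨rfl, rfl⟩), -⟩
    · rcases ih with hr | ⟨h1, h2⟩ | ⟨h1, h2⟩
      · exact Or.inl (h.reachable.trans hr)
      · exact Or.inr (Or.inl ⟨h.reachable.trans h1, h2⟩)
      · exact Or.inr (Or.inr ⟨h.reachable.trans h1, h2⟩)
    · rcases ih with hr | ⟨h1, h2⟩ | ⟨h1, h2⟩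
      · exact Or.inr (Or.inl ⟨Reachable.refl _, hr⟩)
      · exact Or.inl (h1.symm.trans h2)
      · exact Or.inl h2
    · rcases ih with hr | ⟨h1, h2⟩ | ⟨h1, h2⟩
      · exact Or.inr (Or.inr ⟨Reachable.refl _, hr⟩)
      · exact Or.inl h2
      · exact Or.inl (h1.symm.trans h2)

private lemma exists_sep_two_forest [Finite V] {G : SimpleGraph V}
    (hG : G.Connected) {v w : V} (hvw : v ≠ w) :
    ∃ H : SimpleGraph V, IsTwoForest G H ∧ ¬ H.Reachable v w := by
  classical
  set S : Set (SimpleGraph V) := {H | H ≤ G ∧ H.IsAcyclic ∧ ¬ H.Reachable v w} with hS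
  have hbot : (⊥ : SimpleGraph V) ∈ S :=
    ⟨bot_le, isAcyclic_bot, by simp [reachable_bot, hvw]⟩
  obtain ⟨H, hHS, hmax⟩ := Set.Finite.exists_maximalFor id S (Set.toFinite S) ⟨⊥, hbot⟩
  obtain ⟨hle, hac, hsep⟩ := hHS
  have step : ∀ ⦃a b : V⦄, G.Adj a b →
      (H.Reachable a v ∨ H.Reachable a w) → (H.Reachable b v ∨ H.Reachable b w) := by
    intro a b hab hC
    by_cases hr : H.Reachable a b
    · rcases hC with h | h
      · exact Or.inl (hr.symm.trans h)
      · exact Or.inr (hr.symm.trans h)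
    · have hne' : H ≠ H ⊔ edge a b := by
        intro he
        have h2 : (H ⊔ edge a b).Adj a b := by
          rw [sup_adj, edge_adj]
          exact Or.inr ⟨Or.inl ⟨rfl, rfl⟩, hab.ne⟩
        rw [← he] at h2
        exact hr h2.reachable
      have hedge : edge a b ≤ G := by
        intro x y hxy
        rw [edge_adj] at hxy
        rcases hxy with ⟨⟨rfl, rfl⟩ | ⟨rfl, rfl⟩, -⟩
        · exact hab
        · exact hab.symm
      have hnotS : (H ⊔ edge a b) ∉ S := fun hmem => hne' (le_antisymm le_sup_left (hmax hmem le_sup_left))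
      have hreach : (H ⊔ edge a b).Reachable v w := by
        by_contra hnr
        exact hnotS ⟨sup_le hle hedge, acyclic_sup_edge hac hr, hnr⟩
      rcases reach_sup_edge hreach with h | ⟨h1, h2⟩ | ⟨h1, h2⟩
      · exact absurd h hsep
      · exact Or.inr h2
      · exact Or.inl h1.symm
  have hall : ∀ x : V, H.Reachable x v ∨ H.Reachable x w := by
    have main : ∀ {x y : V}, G.Walk x y →
        (H.Reachable x v ∨ H.Reachable x w) → (H.Reachable y v ∨ H.Reachable y w) := by
      intro x y p
      induction p with
      | nil => exact id
      | cons h q ih => exact fun hx => ih (step h hx)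
    intro x
    exact main (hG.preconnected v x).some (Or.inl (Reachable.refl v))
  have hcard : Nat.card H.ConnectedComponent = 2 := by
    rw [Nat.card_eq_two_iff]
    refine ⟨H.connectedComponentMk v, H.connectedComponentMk w, ?_, ?_⟩
    · simp only [ne_eq, ConnectedComponent.eq]
      exact hsep
    · ext c
      simp only [Set.mem_insert_iff, Set.mem_singleton_iff, Set.mem_univ, iff_true]
      refine ConnectedComponent.ind (fun x => ?_) c
      rcases hall x with h | h
      · exact Or.inl (ConnectedComponent.sound h)
      · exact Or.inr (ConnectedComponent.sound h)
  exact ⟨H, ⟨hle, hac, hcard⟩, hsep⟩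

private lemma fsep_triangle [Finite V] (G : SimpleGraph V) (i j v : V) :
    fsep G i j ≤ fsep G i v + fsep G j v := by
  classical
  rw [fsep, fsep, fsep, ← Nat.card_sum]
  refine Nat.card_le_card_of_injective
    (f := fun H : {H : SimpleGraph V // IsTwoForest G H ∧ ¬ H.Reachable i j} =>
      if h : H.1.Reachable i v
      then Sum.inr (⟨H.1, H.2.1, fun hjv => H.2.2 (h.trans hjv.symm)⟩ :
        {H : SimpleGraph V // IsTwoForest G H ∧ ¬ H.Reachable j v})
      else Sum.inl ⟨H.1, H.2.1, h⟩) ?_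
  intro A B hAB
  dsimp only at hAB
  split_ifs at hAB with h1 h2 h2 <;>
    simp only [Sum.inr.injEq, Sum.inl.injEq, Subtype.mk.injEq, reduceCtorEq] at hAB <;>
    first | exact Subtype.ext hAB | exact hAB.elim

private lemma fsep_self (G : SimpleGraph V) (w : V) : fsep G w w = 0 :=
  @Nat.card_of_isEmpty _ ⟨fun H => H.2.2 (Reachable.refl w)⟩

private lemma fsep_pos [Finite V] {G : SimpleGraph V} (hG : G.Connected) {v w : V}
    (hvw : v ≠ w) : 0 < fsep G v w := by
  obtain ⟨H, h1, h2⟩ := exists_sep_two_forest hG hvw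
  have : Nonempty {H : SimpleGraph V // IsTwoForest G H ∧ ¬ H.Reachable v w} := ⟨⟨H, h1, h2⟩⟩
  exact Nat.card_pos

private lemma deg_pos [Fintype V] {G : SimpleGraph V} (hG : G.Connected)
    (hV : 2 ≤ Fintype.card V) (x : V) : 0 < deg G x := by
  obtain ⟨y, hy⟩ := Fintype.exists_ne_of_one_lt_card (by omega) x
  obtain ⟨p⟩ := hG.preconnected x y
  have hne : Nonempty (G.neighborSet x) := by
    cases p with
    | nil => exact absurd rfl hy
    | cons h q => exact ⟨⟨_, h⟩⟩
  exact Nat.card_pos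

end Stmt9Aux

/-- `φ_G(v) > 0` for any connected graph on at least two vertices. -/
theorem stmt_9 {V : Type*} [Fintype V] (G : SimpleGraph V) (hG : G.Connected)
    (hV : 2 ≤ Fintype.card V) (v : V) : 0 < phi G v := by
  classical
  set d : V → ℚ := fun i => (deg G i : ℚ) with hd
  set f : V → V → ℚ := fun i j => (fsep G i j : ℚ) with hf
  have key : phi G v = ∑ i, ∑ j, d i * d j * (f i v + f j v - f i j) := by
    rw [phi, finsum_eq_sum_of_fintype]
    simp only [finsum_eq_sum_of_fintype]
    have hsym : (∑ i, ∑ j, d i * d j * f i v) = ∑ i, ∑ j, d i * d j * f j v := by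
      rw [Finset.sum_comm]
      exact Finset.sum_congr rfl fun i _ => Finset.sum_congr rfl fun j _ => by ring
    have lhs : (∑ i, ∑ j, (deg G i : ℚ) * (2 * (fsep G i v : ℚ) - (fsep G i j : ℚ)) * (deg G j : ℚ))
        = (∑ i, ∑ j, (d i * d j * f i v + d i * d j * f i v - d i * d j * f i j)) :=
      Finset.sum_congr rfl fun i _ => Finset.sum_congr rfl fun j _ => by simp only [hd, hf]; ring
    have rhs : (∑ i, ∑ j, d i * d j * (f i v + f j v - f i j))
        = (∑ i, ∑ j, (d i * d j * f i v + d i * d j * f j v - d i * d j * f i j)) :=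
      Finset.sum_congr rfl fun i _ => Finset.sum_congr rfl fun j _ => by ring
    rw [lhs, rhs]
    simp only [Finset.sum_sub_distrib, Finset.sum_add_distrib]
    rw [hsym]
  rw [key]
  obtain ⟨w, hw⟩ := Fintype.exists_ne_of_one_lt_card (by omega) v
  have hnonneg : ∀ i j : V, 0 ≤ d i * d j * (f i v + f j v - f i j) := by
    intro i j
    apply mul_nonneg (mul_nonneg (Nat.cast_nonneg _) (Nat.cast_nonneg _))
    rw [sub_nonneg]
    show (fsep G i j : ℚ) ≤ (fsep G i v : ℚ) + (fsep G j v : ℚ)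
    exact_mod_cast fsep_triangle G i j v
  apply Finset.sum_pos' (fun i _ => Finset.sum_nonneg fun j _ => hnonneg i j)
  refine ⟨w, Finset.mem_univ w, Finset.sum_pos' (fun j _ => hnonneg w j)
    ⟨w, Finset.mem_univ w, ?_⟩⟩
  have h1 : 0 < d w := by show (0:ℚ) < (deg G w : ℚ); exact_mod_cast deg_pos hG hV w
  have h2 : 0 < f w v := by show (0:ℚ) < (fsep G w v : ℚ); exact_mod_cast fsep_pos hG hw
  have h3 : f w w = 0 := by simp [hf, fsep_self]
  rw [h3]
  exact mul_pos (mul_pos h1 h1) (by linarith)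

end Braess
end
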